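/- Let G be a connected undirected chordal graph and let σ be a lexicographic BFS ordering of its vertices. Orienting each edge of G from the earlier endpoint to the later endpoint in σ yields a DAG with no v-structures. -/

import Mathlib

/-- A graph is chordal if every cycle of length at least four has a chord. -/
def IsChordal {V : Type*} (G : SimpleGraph V) : Prop :=
  ∀ ⦃v : V⦄ (c : G.Walk v v), c.IsCycle → 4 ≤ c.length →
    ∃ u w : V, u ∈ c.support ∧ w ∈ c.support ∧ G.Adj u w ∧ s(u, w) ∉ c.edges

/-- `σ` is a lexicographic BFS ordering of `G` (4-point characterization): whenever
`σ a < σ b < σ c`, `a` is adjacent to `c` but not to `b`, there is some `d` visited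
before `a` that is adjacent to `b` but not to `c`. -/
def IsLexBFSOrder {V : Type*} [Fintype V] (G : SimpleGraph V)
    (σ : V ≃ Fin (Fintype.card V)) : Prop :=
  ∀ a b c : V, σ a < σ b → σ b < σ c → G.Adj a c → ¬ G.Adj a b →
    ∃ d : V, σ d < σ a ∧ G.Adj d b ∧ ¬ G.Adj d c

section Aux

open SimpleGraph

variable {V : Type*} (G : SimpleGraph V) (x : ℕ → V)

/-- A walk following `x 0, x 1, ..., x n`. -/
def chainWalk : ∀ n : ℕ, (∀ i, i < n → G.Adj (x i) (x (i+1))) → G.Walk (x 0) (x n)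
  | 0, _ => Walk.nil
  | n+1, h => Walk.concat (chainWalk n fun i hi => h i (by omega)) (h n (by omega))

lemma chainWalk_support : ∀ (n : ℕ) (h : ∀ i, i < n → G.Adj (x i) (x (i+1))),
    (chainWalk G x n h).support = (List.range (n+1)).map x
  | 0, h => by simp [chainWalk, List.range_succ]
  | n+1, h => by
    rw [chainWalk, Walk.support_concat, chainWalk_support n]
    simp [List.range_succ]

lemma chainWalk_edges : ∀ (n : ℕ) (h : ∀ i, i < n → G.Adj (x i) (x (i+1))),
    (chainWalk G x n h).edges = (List.range n).map (fun i => s(x i, x (i+1)))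
  | 0, h => by simp [chainWalk]
  | n+1, h => by
    rw [chainWalk, Walk.edges_concat, chainWalk_edges n]
    simp [List.range_succ]

lemma chainWalk_length : ∀ (n : ℕ) (h : ∀ i, i < n → G.Adj (x i) (x (i+1))),
    (chainWalk G x n h).length = n
  | 0, h => by simp [chainWalk]
  | n+1, h => by rw [chainWalk, Walk.length_concat, chainWalk_length n]

end Aux

open SimpleGraph in
/-- The key lemma: there is no induced path `x 0 - x 1 - ... - x m` (`m ≥ 2`) in which
`x 0` is the σ-least vertex and `x m` is less than every interior vertex. -/
lemma no_bad_path {V : Type*} [Fintype V] {G : SimpleGraph V}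
    (hchordal : IsChordal G) {σ : V ≃ Fin (Fintype.card V)}
    (hσ : IsLexBFSOrder G σ) :
    ∀ (k : ℕ) (x : ℕ → V) (m : ℕ), (σ (x 0)).val = k → 2 ≤ m →
      (∀ i, i < m → G.Adj (x i) (x (i+1))) →
      (∀ i j, i + 2 ≤ j → j ≤ m → ¬ G.Adj (x i) (x j)) →
      (∀ i j, i ≤ m → j ≤ m → x i = x j → i = j) →
      (∀ i, 1 ≤ i → i ≤ m → σ (x 0) < σ (x i)) →
      (∀ i, 1 ≤ i → i < m → σ (x m) < σ (x i)) →
      False := by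
  intro k
  induction k using Nat.strong_induction_on with
  | _ k IH =>
  intro x m hk hm hchain hind hinj hmin hint
  classical
  obtain ⟨d, hd, hdb, hdc⟩ :=
    hσ (x 0) (x m) (x 1) (hmin m (by omega) le_rfl) (hint 1 le_rfl (by omega))
      (hchain 0 (by omega)) (hind 0 m (by omega) le_rfl)
  have hex : ∃ i, 1 ≤ i ∧ i ≤ m ∧ G.Adj d (x i) := ⟨m, by omega, le_rfl, hdb⟩
  set i := Nat.find hex with hidef
  obtain ⟨hi1, him, hdi⟩ := Nat.find_spec hex
  rw [← hidef] at hi1 him hdi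
  have hminadj : ∀ j, 1 ≤ j → j < i → ¬ G.Adj d (x j) := by
    intro j h1 h2 hadj
    exact Nat.find_min hex h2 ⟨h1, by omega, hadj⟩
  have hi2 : 2 ≤ i := by
    by_contra hlt
    have : i = 1 := by omega
    rw [this] at hdi
    exact hdc hdi
  have hdne : ∀ t, t ≤ m → d ≠ x t := by
    intro t ht heq
    have hlt : σ d < σ (x t) := by
      rcases Nat.eq_zero_or_pos t with h0 | h0
      · rw [h0]; exact hd
      · exact lt_trans hd (hmin t h0 ht)
    rw [heq] at hlt
    exact lt_irrefl _ hlt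
  by_cases hd0 : G.Adj d (x 0)
  · -- close a chordless cycle d - x 0 - x 1 - ... - x i - d
    have hchain' : ∀ j, j < i → G.Adj (x j) (x (j+1)) := fun j hj => hchain j (by omega)
    set q : G.Walk (x 0) d := (chainWalk G x i hchain').concat hdi.symm with hq
    set C : G.Walk d d := Walk.cons hd0 q with hC
    have hqsup : q.support = ((List.range (i+1)).map x).concat d := by
      rw [hq, Walk.support_concat, chainWalk_support, List.concat_eq_append]
    have hqedges : q.edges = ((List.range i).map (fun j => s(x j, x (j+1)))).concat s(x i, d) := by
      rw [hq, Walk.edges_concat, chainWalk_edges]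
    have hqpath : q.IsPath := by
      rw [Walk.isPath_def, hqsup, List.concat_eq_append]
      rw [List.nodup_append]
      refine ⟨?_, List.nodup_singleton d, ?_⟩
      · refine List.Nodup.map_on ?_ List.nodup_range
        intro a ha b hb hab
        rw [List.mem_range] at ha hb
        exact hinj a b (by omega) (by omega) hab
      · intro u hu
        simp only [List.mem_map, List.mem_range] at hu
        obtain ⟨j, hj, rfl⟩ := hu
        simp only [List.mem_singleton, forall_eq]
        exact fun h => hdne j (by omega) h.symm
    have hcyc : C.IsCycle := by
      rw [hC, Walk.cons_isCycle_iff]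
      refine ⟨hqpath, ?_⟩
      rw [hqedges, List.concat_eq_append]
      intro hmem
      rw [List.mem_append] at hmem
      rcases hmem with hmem | hmem
      · simp only [List.mem_map, List.mem_range] at hmem
        obtain ⟨j, hj, hjeq⟩ := hmem
        rw [Sym2.eq_iff] at hjeq
        rcases hjeq with ⟨h1, _⟩ | ⟨_, h2⟩
        · exact hdne j (by omega) h1.symm
        · exact hdne (j+1) (by omega) h2.symm
      · rw [List.mem_singleton, Sym2.eq_iff] at hmem
        rcases hmem with ⟨h1, _⟩ | ⟨_, h2⟩
        · exact hdne i (by omega) h1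
        · exact absurd (hinj 0 i (by omega) him h2) (by omega)
    have hlen : 4 ≤ C.length := by
      rw [hC, Walk.length_cons, hq, Walk.length_concat, chainWalk_length]
      omega
    obtain ⟨u, w, hu, hw, huw, hno⟩ := hchordal C hcyc hlen
    have hmem : ∀ v, v ∈ C.support → v = d ∨ ∃ j, j ≤ i ∧ v = x j := by
      intro v hv
      rw [hC, Walk.support_cons, hqsup, List.concat_eq_append] at hv
      simp only [List.mem_cons, List.mem_append, List.mem_map, List.mem_range,
        List.not_mem_nil, or_false] at hv
      rcases hv with rfl | ⟨j, hj, rfl⟩ | rfl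
      · exact Or.inl rfl
      · exact Or.inr ⟨j, by omega, rfl⟩
      · exact Or.inl rfl
    have hCedges : C.edges = s(d, x 0) ::
        (((List.range i).map (fun j => s(x j, x (j+1)))).concat s(x i, d)) := by
      rw [hC, Walk.edges_cons, hqedges]
    have hedge_d : ∀ j, j ≤ i → G.Adj d (x j) → s(d, x j) ∈ C.edges := by
      intro j hj hadj
      rcases Nat.eq_zero_or_pos j with h0 | h0
      · rw [h0, hCedges]; exact List.mem_cons_self
      rcases eq_or_lt_of_le hj with heq | hlt
      · rw [heq, hCedges, List.concat_eq_append]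
        refine List.mem_cons_of_mem _ (List.mem_append_right _ ?_)
        rw [List.mem_singleton, Sym2.eq_swap]
      · exact absurd hadj (hminadj j h0 hlt)
    have hedge_xx : ∀ a b, a ≤ i → b ≤ i → G.Adj (x a) (x b) → s(x a, x b) ∈ C.edges := by
      have base : ∀ a b, a ≤ i → b ≤ i → a < b → G.Adj (x a) (x b) → s(x a, x b) ∈ C.edges := by
        intro a b ha hb hab hadj
        have hb1 : b = a + 1 := by
          by_contra hne
          exact hind a b (by omega) (by omega) hadj
        subst hb1
        rw [hCedges, List.concat_eq_append]
        refine List.mem_cons_of_mem _ (List.mem_append_left _ ?_)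
        simp only [List.mem_map, List.mem_range]
        exact ⟨a, by omega, rfl⟩
      intro a b ha hb hadj
      rcases lt_trichotomy a b with h | h | h
      · exact base a b ha hb h hadj
      · rw [h] at hadj; exact absurd hadj (G.loopless.irrefl _)
      · rw [Sym2.eq_swap]; exact base b a hb ha h hadj.symm
    rcases hmem u hu with rfl | ⟨j, hj, rfl⟩
    · rcases hmem w hw with rfl | ⟨j, hj, rfl⟩
      · exact absurd huw (G.loopless.irrefl _)
      · exact hno (hedge_d j hj huw)
    · rcases hmem w hw with rfl | ⟨j', hj', rfl⟩
      · rw [Sym2.eq_swap] at hno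
        exact hno (hedge_d j hj huw.symm)
      · exact hno (hedge_xx j j' hj hj' huw)
  · -- extend the path: new path d - x i - x (i-1) - ... - x 0
    set y : ℕ → V := fun t => if t = 0 then d else x (i + 1 - t) with hy
    have hy0 : y 0 = d := rfl
    have hyt : ∀ t, 1 ≤ t → y t = x (i + 1 - t) := by
      intro t ht; simp only [hy]; rw [if_neg (by omega : ¬ t = 0)]
    apply IH (σ d).val (by rw [← hk]; exact hd) y (i + 1) (by rw [hy0]) (by omega)
    · -- chain
      intro t ht
      rcases Nat.eq_zero_or_pos t with rfl | hpos
      · rw [hy0, hyt 1 le_rfl]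
        simpa using hdi
      · rw [hyt t hpos, hyt (t+1) (by omega)]
        have h1 : i + 1 - t = (i + 1 - (t+1)) + 1 := by omega
        rw [h1]
        exact (hchain (i + 1 - (t+1)) (by omega)).symm
    · -- induced
      intro a b hab hb
      rcases Nat.eq_zero_or_pos a with rfl | hpos
      · rw [hy0, hyt b (by omega)]
        rcases Nat.eq_zero_or_pos (i + 1 - b) with h0 | h0
        · rw [h0]; exact hd0
        · exact hminadj _ h0 (by omega)
      · rw [hyt a hpos, hyt b (by omega)]
        intro hadj
        exact hind (i + 1 - b) (i + 1 - a) (by omega) (by omega) hadj.symm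
    · -- injective
      intro a b ha hb heq
      rcases Nat.eq_zero_or_pos a with rfl | hpa
      · rcases Nat.eq_zero_or_pos b with rfl | hpb
        · rfl
        · rw [hy0, hyt b hpb] at heq
          exact absurd heq (hdne _ (by omega))
      · rcases Nat.eq_zero_or_pos b with rfl | hpb
        · rw [hy0, hyt a hpa] at heq
          exact absurd heq.symm (hdne _ (by omega))
        · rw [hyt a hpa, hyt b hpb] at heq
          have := hinj _ _ (by omega) (by omega) heq
          omega
    · -- y 0 minimal
      intro t h1 h2
      rw [hy0, hyt t h1]
      rcases Nat.eq_zero_or_pos (i + 1 - t) with h0 | h0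
      · rw [h0]; exact hd
      · exact lt_trans hd (hmin _ h0 (by omega))
    · -- last below interior
      intro t h1 h2
      rw [hyt (i+1) (by omega), hyt t h1]
      have : i + 1 - (i + 1) = 0 := by omega
      rw [this]
      exact hmin _ (by omega) (by omega)

/-- Orienting each edge of a connected chordal graph from the earlier to the later
endpoint of a LexBFS ordering yields a DAG with no v-structures. -/
theorem lexbfs_orientation_dag_no_vstructures {V : Type*} [Fintype V]
    (G : SimpleGraph V) (hconn : G.Connected) (hchordal : IsChordal G)
    (σ : V ≃ Fin (Fintype.card V)) (hσ : IsLexBFSOrder G σ)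
    (D : V → V → Prop) (hD : ∀ x y : V, D x y ↔ G.Adj x y ∧ σ x < σ y) :
    (∀ x : V, ¬ Relation.TransGen D x x) ∧
      (∀ x y z : V, D x y → D z y → x ≠ z → G.Adj x z) := by
  have key : ∀ x z y : V, σ x < σ z → σ z < σ y → G.Adj x y → G.Adj z y →
      ¬ G.Adj x z → False := by
    intro x z y h1 h2 hxy hzy hxz
    set f : ℕ → V := fun n => if n = 0 then x else if n = 1 then y else z with hf
    have hf0 : f 0 = x := rfl
    have hf1 : f 1 = y := rfl
    have hf2 : f 2 = z := rfl
    have hne : ∀ a b : V, σ a < σ b → a ≠ b := by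
      intro a b hab heq; rw [heq] at hab; exact lt_irrefl _ hab
    apply no_bad_path hchordal hσ (σ (f 0)).val f 2 rfl le_rfl
    · intro i hi
      interval_cases i
      · rw [hf0, hf1]; exact hxy
      · rw [hf1, hf2]; exact hzy.symm
    · intro a b hab hb
      have ha0 : a = 0 := by omega
      have hb2 : b = 2 := by omega
      rw [ha0, hb2, hf0, hf2]; exact hxz
    · intro a b ha hb heq
      interval_cases a <;> interval_cases b <;>
        simp_all [hf0, hf1, hf2] <;>
        first
          | rfl
          | exact absurd heq (hne _ _ (lt_trans h1 h2))
          | exact absurd heq.symm (hne _ _ (lt_trans h1 h2))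
          | exact absurd heq (hne _ _ h1)
          | exact absurd heq.symm (hne _ _ h1)
          | exact absurd heq (hne _ _ h2)
          | exact absurd heq.symm (hne _ _ h2)
    · intro i h1' h2'
      interval_cases i
      · rw [hf0, hf1]; exact lt_trans h1 h2
      · rw [hf0, hf2]; exact h1
    · intro i h1' h2'
      have : i = 1 := by omega
      rw [this, hf2, hf1]; exact h2
  constructor
  · intro x hx
    have mono : ∀ a b : V, Relation.TransGen D a b → σ a < σ b := by
      intro a b h
      induction h with
      | single h' => exact ((hD _ _).1 h').2
      | tail _ h' ih => exact lt_trans ih ((hD _ _).1 h').2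
    exact absurd (mono x x hx) (lt_irrefl _)
  · intro x y z hxy hzy hne
    obtain ⟨haxy, hlxy⟩ := (hD _ _).1 hxy
    obtain ⟨hazy, hlzy⟩ := (hD _ _).1 hzy
    by_contra hadj
    rcases lt_trichotomy (σ x) (σ z) with h | h | h
    · exact key x z y h hlzy haxy hazy hadj
    · exact hne (σ.injective h)
    · exact key z x y h hlxy hazy haxy (fun hh => hadj hh.symm)
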